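/- Consider the deterministic MDP with S = [0,2], s_0 = 0, A = (0,1], transition s → s+a, termination when s+a > 2, and γ = 1. The non-Markovian policy π that samples A_0 uniformly on (0,1] at t=0 and plays a_t = 1/t − 1/(t+1) for t > 0 has a σ-infinite occupancy measure: for any interval [b+1, c+1] with 0 ≤ b < c ≤ 1, μ_1^π([b+1, c+1]) = ∞. -/
import Mathlib


open MeasureTheory
open scoped ENNReal

/-!
Deterministic continuous MDP on `S = [0,2]` with actions in `(0,1]`: taking
action `a` in state `s` moves to `s + a` (termination when `s + a > 2`), `γ = 1`.
The non-Markovian policy samples `A₀` uniformly on `(0,1]` and plays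
`aₜ = 1/t − 1/(t+1)` for `t > 0`, so that `S₀ = 0` and `Sₜ = A₀ + 1 - 1/t` for
`t ≥ 1` (the trajectory never terminates, converging to `A₀ + 1 ≤ 2`). Its
occupancy measure `μ₁^π(σ) = E_{A₀}[∑ₜ 1(Sₜ ∈ σ)]` is σ-infinite: every
interval `[b+1, c+1]` with `0 ≤ b < c ≤ 1` has infinite occupancy.
-/

/-- The state at time `t` given the initial action `a`. -/
noncomputable def traj12 (a : ℝ) (t : ℕ) : ℝ :=
  if t = 0 then 0 else a + 1 - 1 / (t : ℝ)

/-- Occupancy measure of the policy: expectation over `A₀ ~ U((0,1])` of the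
number of visits to `σ`. -/
noncomputable def occ12 (σ : Set ℝ) : ℝ≥0∞ :=
  ∫⁻ a in Set.Ioc (0 : ℝ) 1,
    ∑' t : ℕ, σ.indicator (fun _ => (1 : ℝ≥0∞)) (traj12 a t) ∂volume

lemma tsum_top_of_mem {b c a : ℝ} (hb : b < a) (hc : a ≤ c) :
    ∑' t : ℕ, (Set.Icc (b + 1) (c + 1)).indicator
      (fun _ => (1 : ℝ≥0∞)) (traj12 a t) = ⊤ := by
  obtain ⟨N, hN⟩ := exists_nat_one_div_lt (sub_pos.mpr hb)
  have key : ∀ n : ℕ, (Set.Icc (b + 1) (c + 1)).indicator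
      (fun _ => (1 : ℝ≥0∞)) (traj12 a (n + (N + 1))) = 1 := by
    intro n
    have htpos : (0 : ℝ) < ((n + (N + 1) : ℕ) : ℝ) := by positivity
    have hle : 1 / ((n + (N + 1) : ℕ) : ℝ) ≤ 1 / ((N : ℝ) + 1) := by
      apply one_div_le_one_div_of_le (by positivity)
      push_cast; linarith
    have hmem : traj12 a (n + (N + 1)) ∈ Set.Icc (b + 1) (c + 1) := by
      rw [traj12, if_neg (by omega)]
      constructor
      · have : 1 / ((n + (N + 1) : ℕ) : ℝ) < a - b := lt_of_le_of_lt hle hN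
        linarith
      · have : 0 < 1 / ((n + (N + 1) : ℕ) : ℝ) := by positivity
        linarith
    simp [Set.indicator_of_mem hmem]
  rw [eq_top_iff]
  calc (⊤ : ℝ≥0∞) = ∑' n : ℕ, (Set.Icc (b + 1) (c + 1)).indicator
        (fun _ => (1 : ℝ≥0∞)) (traj12 a (n + (N + 1))) := by
        simp only [key]
        exact (ENNReal.tsum_const_eq_top_of_ne_zero one_ne_zero).symm
    _ ≤ _ := ENNReal.tsum_comp_le_tsum_of_injective (add_left_injective (N + 1)) _

theorem sigma_infinite_occupancy_continuous_mdp :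
    ∀ b c : ℝ, 0 ≤ b → b < c → c ≤ 1 →
      occ12 (Set.Icc (b + 1) (c + 1)) = ⊤ := by
  intro b c hb hbc hc
  rw [eq_top_iff, occ12]
  calc (⊤ : ℝ≥0∞) = ∫⁻ _ in Set.Ioc b c, ⊤ ∂volume := by
        rw [setLIntegral_const]
        rw [Real.volume_Ioc]
        rw [ENNReal.top_mul]
        simp [sub_pos.mpr hbc]
        exact hbc
    _ ≤ ∫⁻ a in Set.Ioc b c,
          ∑' t : ℕ, (Set.Icc (b + 1) (c + 1)).indicator
            (fun _ => (1 : ℝ≥0∞)) (traj12 a t) ∂volume := by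
        apply setLIntegral_mono' measurableSet_Ioc
        intro a ha
        rw [tsum_top_of_mem ha.1 ha.2]
    _ ≤ _ := lintegral_mono_set (Set.Ioc_subset_Ioc (by linarith) hc)
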